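/- arXiv:1905.11981 — 2 statements merged into one kernel-verified Lean document; each statement's English description precedes it below -/
import Mathlib

section
/- Let m ∈ ℕ with m ≥ 1, let r ∈ ℕ₀, and let A ⊆ ℕ₀ be an IP_r^+ set all of whose sidelengths n₁,…,n_r are coprime to m. Then the set of residues A mod m has cardinality at least min(m, r+1). -/
open scoped BigOperators

namespace MultAuto

/-- Base-`k` value of a word over `Σ_k` (most significant digit first); `[ε]_k = 0`. -/
def valk (k : ℕ) (u : List ℕ) : ℕ := u.foldl (fun acc d => k * acc + d) 0

/-- `u` is a word over the alphabet `Σ_k = {0,…,k-1}`. -/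
def IsWord (k : ℕ) (u : List ℕ) : Prop := ∀ d ∈ u, d < k

/-- `u` has no leading zeros (the empty word qualifies). -/
def NoLeadZero : List ℕ → Prop
  | [] => True
  | d :: _ => d ≠ 0

/-- `wpow v l` is the `l`-fold concatenation `v^l`. -/
def wpow (v : List ℕ) (l : ℕ) : List ℕ := (List.replicate l v).flatten

/-- Transition function of a word: `δ_{uv} = δ_u ∘ δ_v`. -/
def deltaW {S : Type*} (δ : ℕ → S → S) : List ℕ → S → S
  | [] => id
  | d :: t => δ d ∘ deltaW δ t

/-- `a : ℕ → ℂ` is a `k`-automatic sequence. -/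
def IsAutomatic (k : ℕ) (a : ℕ → ℂ) : Prop :=
  ∃ (S : Type) (_ : Fintype S) (s₀ : S) (δ : ℕ → S → S) (τ : S → ℂ),
    ∀ u : List ℕ, IsWord k u → NoLeadZero u → a (valk k u) = τ (deltaW δ u s₀)

/-- `a` is multiplicative: `a (m n) = a m * a n` for coprime positive `m, n`. -/
def IsMult (a : ℕ → ℂ) : Prop :=
  ∀ m n : ℕ, 0 < m → 0 < n → Nat.Coprime m n → a (m * n) = a m * a n

/-- The word `u_r v_r^{l_r} u_{r-1} ⋯ u_1 v_1^{l_1} u_0`. -/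
def aridWord (u v : ℕ → List ℕ) (l : ℕ → ℕ) : ℕ → List ℕ
  | 0 => u 0
  | r + 1 => u (r + 1) ++ wpow (v (r + 1)) (l (r + 1)) ++ aridWord u v l r

/-- `A` is a basic arid set of rank ≤ r in base k. -/
def BasicArid (k r : ℕ) (A : Set ℕ) : Prop :=
  ∃ u v : ℕ → List ℕ, (∀ i, IsWord k (u i)) ∧ (∀ i, IsWord k (v i)) ∧
    A = {n | ∃ l : ℕ → ℕ, n = valk k (aridWord u v l r)}

/-- `A` is an arid set of rank ≤ r: a finite union of basic arid sets of rank ≤ r. -/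
def AridOfRank (k r : ℕ) (A : Set ℕ) : Prop :=
  ∃ (m : ℕ) (B : Fin m → Set ℕ), (∀ j, BasicArid k r (B j)) ∧ A = ⋃ j, B j

/-- `A` is arid (in base `k`). -/
def Arid (k : ℕ) (A : Set ℕ) : Prop := ∃ r, AridOfRank k r A

/-- `χ : ℕ → ℂ` is a Dirichlet character of modulus `m`: completely multiplicative,
`m`-periodic, and nonvanishing exactly at integers coprime to `m`. -/
def IsDirichletLike (m : ℕ) (χ : ℕ → ℂ) : Prop :=
  0 < m ∧ (∀ a b : ℕ, 0 < a → 0 < b → χ (a * b) = χ a * χ b) ∧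
  (∀ n : ℕ, 0 < n → χ (n + m) = χ n) ∧
  (∀ n : ℕ, 0 < n → (χ n ≠ 0 ↔ Nat.Coprime n m))

/-- `(n)_k^l`: the last `l` base-`k` digits of `n`, padded with leading zeros,
most significant digit first. -/
def padk (k l n : ℕ) : List ℕ := (List.range l).reverse.map fun i => n / k ^ i % k

/-- The equivalence `n₁ ∼ n₂` on `ℕ` induced by the transition maps `δ`. -/
def EqvN (k : ℕ) {S : Type*} (δ : ℕ → S → S) (n₁ n₂ : ℕ) : Prop :=
  ∃ l₀ : ℕ, ∀ l ≥ l₀, deltaW δ (padk k l n₁) = deltaW δ (padk k l n₂)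

/-- `E ⊆ ℕ` has upper Banach density zero. -/
def UpperBanachDensityZero (E : Set ℕ) : Prop :=
  ∀ ε : ℝ, 0 < ε → ∃ N₀ : ℕ, ∀ N ≥ N₀, ∀ M : ℕ,
    ((E ∩ Set.Ico M (M + N)).ncard : ℝ) ≤ ε * N

lemma closure_univ {m : ℕ} [NeZero m] (u : ZMod m) (hu : IsUnit u)
    (S : Finset (ZMod m)) (hS : S.Nonempty) (hclosed : ∀ x ∈ S, x + u ∈ S) :
    ∀ x : ZMod m, x ∈ S := by
  obtain ⟨s, hs⟩ := hS
  have key : ∀ k : ℕ, s + k • u ∈ S := by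
    intro k
    induction k with
    | zero => simpa using hs
    | succ k ih =>
      have := hclosed _ ih
      rw [succ_nsmul, ← add_assoc]
      exact this
  intro x
  obtain ⟨w, hw⟩ := hu
  have hkey : (((x - s) * (↑w⁻¹ : ZMod m)).val : ZMod m) * u = x - s := by
    rw [ZMod.natCast_val, ZMod.cast_id, mul_assoc, ← hw]
    simp [mul_assoc, ← Units.val_mul]
  have hgoal : s + (((x - s) * (↑w⁻¹ : ZMod m)).val : ℕ) • u = x := by
    rw [nsmul_eq_mul, hkey]; ring
  rw [← hgoal]; exact key _

lemma zmod_lemma (m : ℕ) (hm : 1 ≤ m) :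
    ∀ (r : ℕ) (c : ZMod m) (n : Fin r → ZMod m), (∀ i, IsUnit (n i)) →
    min m (r + 1) ≤ ((Finset.univ : Finset (Finset (Fin r))).image
      (fun I => c + ∑ i ∈ I, n i)).card := by
  have : NeZero m := ⟨by omega⟩
  intro r
  induction r with
  | zero =>
    intro c n _
    have hne : ((Finset.univ : Finset (Finset (Fin 0))).image
        (fun I => c + ∑ i ∈ I, n i)).Nonempty :=
      ⟨c + ∑ i ∈ (∅ : Finset (Fin 0)), n i,
        Finset.mem_image.2 ⟨∅, Finset.mem_univ _, rfl⟩⟩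
    calc min m 1 ≤ 1 := min_le_right _ _
      _ ≤ _ := Finset.Nonempty.card_pos hne
  | succ r ih =>
    intro c n hn
    set u := n (Fin.last r) with hu
    set S := (Finset.univ : Finset (Finset (Fin r))).image
      (fun I => c + ∑ i ∈ I, n (Fin.castSucc i)) with hSdef
    set T := ((Finset.univ : Finset (Finset (Fin (r + 1)))).image
      (fun I => c + ∑ i ∈ I, n i)) with hTdef
    have claim1 : ∀ J : Finset (Fin r), c + ∑ i ∈ J, n (Fin.castSucc i) ∈ T := by
      intro J
      refine Finset.mem_image.2 ⟨J.map ⟨Fin.castSucc, Fin.castSucc_injective r⟩,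
        Finset.mem_univ _, ?_⟩
      rw [Finset.sum_map]
      rfl
    have claim2 : ∀ J : Finset (Fin r),
        (c + ∑ i ∈ J, n (Fin.castSucc i)) + u ∈ T := by
      intro J
      have hlast : Fin.last r ∉ J.map ⟨Fin.castSucc, Fin.castSucc_injective r⟩ := by
        simp only [Finset.mem_map, Function.Embedding.coeFn_mk]
        rintro ⟨a, -, h⟩
        exact absurd h (Fin.castSucc_lt_last a).ne
      refine Finset.mem_image.2
        ⟨insert (Fin.last r) (J.map ⟨Fin.castSucc, Fin.castSucc_injective r⟩),
        Finset.mem_univ _, ?_⟩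
      rw [Finset.sum_insert hlast, Finset.sum_map]
      simp only [Function.Embedding.coeFn_mk]
      ring
    have hST : S ⊆ T := by
      intro x hx
      obtain ⟨J, _, rfl⟩ := Finset.mem_image.1 hx
      exact claim1 J
    have hSne : S.Nonempty :=
      ⟨c + ∑ i ∈ (∅ : Finset (Fin r)), n (Fin.castSucc i),
        Finset.mem_image.2 ⟨∅, Finset.mem_univ _, rfl⟩⟩
    have hScard : min m (r + 1) ≤ S.card := ih c (fun i => n (Fin.castSucc i))
      (fun i => hn _)
    by_cases hc : ∀ x ∈ S, x + u ∈ S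
    · have hall := closure_univ u (hn _) S hSne hc
      have : (Finset.univ : Finset (ZMod m)) ⊆ S := fun x _ => hall x
      have hcard : m ≤ S.card := by
        calc m = Fintype.card (ZMod m) := (ZMod.card m).symm
          _ = (Finset.univ : Finset (ZMod m)).card := rfl
          _ ≤ S.card := Finset.card_le_card this
      calc min m (r + 1 + 1) ≤ m := min_le_left _ _
        _ ≤ S.card := hcard
        _ ≤ T.card := Finset.card_le_card hST
    · push_neg at hc
      obtain ⟨x, hxS, hxu⟩ := hc
      have hxuT : x + u ∈ T := by
        obtain ⟨J, _, rfl⟩ := Finset.mem_image.1 hxS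
        exact claim2 J
      have hsub : insert (x + u) S ⊆ T := by
        intro y hy
        rcases Finset.mem_insert.1 hy with rfl | hy
        · exact hxuT
        · exact hST hy
      have : S.card + 1 ≤ T.card := by
        have := Finset.card_le_card hsub
        rwa [Finset.card_insert_of_notMem hxu] at this
      omega

/-- an `IP_r^+` set with sidelengths coprime to `m` covers at least
`min m (r+1)` residues modulo `m`. -/
theorem stmt2 (m r : ℕ) (hm : 1 ≤ m) (n₀ : ℕ) (n : Fin r → ℕ)
    (hpos : ∀ i, 0 < n i) (hcop : ∀ i, Nat.Coprime (n i) m) :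
    min m (r + 1) ≤ ((Finset.univ : Finset (Finset (Fin r))).image
      (fun I => (n₀ + ∑ i ∈ I, n i) % m)).card := by
  have : NeZero m := ⟨by omega⟩
  have hunit : ∀ i, IsUnit ((n i : ZMod m)) := fun i =>
    (ZMod.isUnit_iff_coprime (n i) m).2 (hcop i)
  have key := zmod_lemma m hm r (n₀ : ZMod m) (fun i => (n i : ZMod m)) hunit
  have heq : (((Finset.univ : Finset (Finset (Fin r))).image
      (fun I => (n₀ + ∑ i ∈ I, n i) % m)).image (fun x : ℕ => (x : ZMod m))) =
      ((Finset.univ : Finset (Finset (Fin r))).image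
      (fun I => ((n₀ : ZMod m) + ∑ i ∈ I, (n i : ZMod m)))) := by
    rw [Finset.image_image]
    apply Finset.image_congr
    intro I _
    simp [Function.comp, ZMod.natCast_mod, Nat.cast_add, Nat.cast_sum]
  calc min m (r + 1) ≤ _ := key
    _ = _ := by rw [← heq]
    _ ≤ _ := Finset.card_image_le

end MultAuto
end

section
/- Let k ≥ 2 be an integer and let a : ℕ₀ → ℂ be a multiplicative k-automatic sequence such that there are infinitely many primes p for which a(p^α) = 0 for some α ∈ ℕ. Then the set Z = {n ∈ ℕ : a(n) ≠ 0} is arid (in base k). -/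
open scoped BigOperators

namespace MultAuto

section Aux

variable {k : ℕ} {S : Type*} {δ : ℕ → S → S}

/-! ### wpow lemmas -/

@[simp] lemma wpow_zero (v : List ℕ) : wpow v 0 = [] := rfl

lemma wpow_succ (v : List ℕ) (n : ℕ) : wpow v (n + 1) = v ++ wpow v n := by
  simp [wpow, List.replicate_succ]

@[simp] lemma wpow_one (v : List ℕ) : wpow v 1 = v := by
  simp [wpow_succ]

@[simp] lemma wpow_nil (n : ℕ) : wpow ([] : List ℕ) n = [] := by
  induction n with
  | zero => rfl
  | succ n ih => simp [wpow_succ, ih]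

lemma wpow_add (v : List ℕ) (a b : ℕ) : wpow v (a + b) = wpow v a ++ wpow v b := by
  induction a with
  | zero => simp
  | succ a ih => rw [Nat.succ_add, wpow_succ, wpow_succ, ih, List.append_assoc]

lemma wpow_mul (v : List ℕ) (a b : ℕ) : wpow v (a * b) = wpow (wpow v a) b := by
  induction b with
  | zero => simp
  | succ b ih =>
    rw [Nat.mul_succ, wpow_add, wpow_succ, ih, ← ih, ← wpow_add, ← wpow_add, Nat.add_comm]

lemma length_wpow (v : List ℕ) (n : ℕ) : (wpow v n).length = n * v.length := by
  induction n with
  | zero => simp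
  | succ n ih => rw [wpow_succ]; simp [ih, Nat.succ_mul]; ring

lemma isWord_wpow {v : List ℕ} (hv : IsWord k v) (n : ℕ) : IsWord k (wpow v n) := by
  induction n with
  | zero => intro d hd; simp at hd
  | succ n ih =>
    rw [wpow_succ]
    intro d hd
    rcases List.mem_append.1 hd with h | h
    · exact hv d h
    · exact ih d h

lemma isWord_append {u v : List ℕ} (hu : IsWord k u) (hv : IsWord k v) : IsWord k (u ++ v) := by
  intro d hd; rcases List.mem_append.1 hd with h | h
  · exact hu d h
  · exact hv d h

lemma isWord_sublist {u v : List ℕ} (hv : IsWord k v) (h : ∀ d ∈ u, d ∈ v) : IsWord k u :=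
  fun d hd => hv d (h d hd)

/-! ### valk lemmas -/

lemma valk_foldl (i : ℕ) (u : List ℕ) :
    u.foldl (fun acc d => k * acc + d) i = i * k ^ u.length + valk k u := by
  induction u generalizing i with
  | nil => simp [valk]
  | cons d t ih =>
    have h1 : (d :: t).foldl (fun acc d => k * acc + d) i
        = (k * i + d) * k ^ t.length + valk k t := by
      rw [List.foldl_cons]; exact ih _
    have h2 : valk k (d :: t) = (k * 0 + d) * k ^ t.length + valk k t := by
      rw [valk, List.foldl_cons]; exact ih _
    rw [h1, h2, List.length_cons]
    ring

lemma valk_cons (d : ℕ) (t : List ℕ) : valk k (d :: t) = d * k ^ t.length + valk k t := by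
  show t.foldl _ (k * 0 + d) = _
  rw [valk_foldl]; ring_nf

lemma valk_append (u v : List ℕ) : valk k (u ++ v) = valk k u * k ^ v.length + valk k v := by
  rw [valk, List.foldl_append, valk_foldl]; rfl

lemma valk_lt {u : List ℕ} (hk : 1 ≤ k) (hu : IsWord k u) : valk k u < k ^ u.length := by
  induction u with
  | nil => simpa [valk] using Nat.one_le_iff_ne_zero.mp (Nat.one_le_pow _ _ hk) |>.bot_lt
  | cons d t ih =>
    rw [valk_cons, List.length_cons, pow_succ']
    have hd : d < k := hu d (List.mem_cons_self)
    have ht : valk k t < k ^ t.length := ih (fun x hx => hu x (List.mem_cons_of_mem _ hx))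
    calc d * k ^ t.length + valk k t < d * k ^ t.length + k ^ t.length := by omega
    _ = (d + 1) * k ^ t.length := by ring
    _ ≤ k * k ^ t.length := Nat.mul_le_mul_right _ (by omega)

lemma valk_inj {u v : List ℕ} (hk : 1 ≤ k) (hu : IsWord k u) (hv : IsWord k v)
    (hlen : u.length = v.length) (hval : valk k u = valk k v) : u = v := by
  induction u generalizing v with
  | nil => cases v with
    | nil => rfl
    | cons d t => simp at hlen
  | cons d t ih =>
    cases v with
    | nil => simp at hlen
    | cons e s =>
      have hls : t.length = s.length := by simpa using hlen
      have hd : d < k := hu d (List.mem_cons_self)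
      have he : e < k := hv e (List.mem_cons_self)
      have ht : valk k t < k ^ t.length := valk_lt hk (fun x hx => hu x (List.mem_cons_of_mem _ hx))
      have hs : valk k s < k ^ s.length := valk_lt hk (fun x hx => hv x (List.mem_cons_of_mem _ hx))
      rw [valk_cons, valk_cons, ← hls] at hval
      rw [← hls] at hs
      have hde : d = e := by
        rcases Nat.lt_trichotomy d e with h | h | h
        · exfalso
          have h2 : (d + 1) * k ^ t.length ≤ e * k ^ t.length := Nat.mul_le_mul_right _ h
          have h3 : (d + 1) * k ^ t.length = d * k ^ t.length + k ^ t.length := by ring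
          omega
        · exact h
        · exfalso
          have h2 : (e + 1) * k ^ t.length ≤ d * k ^ t.length := Nat.mul_le_mul_right _ h
          have h3 : (e + 1) * k ^ t.length = e * k ^ t.length + k ^ t.length := by ring
          omega
      subst hde
      have : valk k t = valk k s := by omega
      rw [ih (fun x hx => hu x (List.mem_cons_of_mem _ hx)) (fun x hx => hv x (List.mem_cons_of_mem _ hx)) hls this]

lemma valk_pos {u : List ℕ} (hk : 1 ≤ k) (hu : u ≠ []) (h0 : NoLeadZero u) : 0 < valk k u := by
  cases u with
  | nil => exact absurd rfl hu
  | cons d t =>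
    have : d ≠ 0 := h0
    rw [valk_cons]
    have := Nat.one_le_pow t.length k hk
    have : 1 * 1 ≤ d * k ^ t.length := Nat.mul_le_mul (by omega) (by omega)
    omega

lemma valk_reverse (L : List ℕ) : valk k L.reverse = Nat.ofDigits k L := by
  induction L with
  | nil => simp [valk, Nat.ofDigits]
  | cons d t ih =>
    rw [List.reverse_cons, valk_append, Nat.ofDigits_cons, ih]
    simp [valk_cons, valk]
    ring

/-! ### NoLeadZero lemmas -/

lemma noLeadZero_iff (u : List ℕ) : NoLeadZero u ↔ ∀ d, u.head? = some d → d ≠ 0 := by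
  cases u with
  | nil => simp [NoLeadZero]
  | cons d t => simp [NoLeadZero]

lemma noLeadZero_append_left {u v : List ℕ} (hu : NoLeadZero u) (hne : u ≠ []) :
    NoLeadZero (u ++ v) := by
  cases u with
  | nil => exact absurd rfl hne
  | cons d t => exact hu

lemma noLeadZero_of_prefix {u w : List ℕ} (h : NoLeadZero (u ++ w)) (hne : u ≠ []) :
    NoLeadZero u := by
  cases u with
  | nil => exact absurd rfl hne
  | cons d t => exact h

/-! ### deltaW lemmas -/

@[simp] lemma deltaW_nil (s : S) : deltaW δ [] s = s := rfl

lemma deltaW_append (u v : List ℕ) (s : S) :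
    deltaW δ (u ++ v) s = deltaW δ u (deltaW δ v s) := by
  induction u with
  | nil => rfl
  | cons d t ih => show δ d (deltaW δ (t ++ v) s) = _; rw [ih]; rfl

/-- Reading a list of digits left-to-right (little-endian reading order). -/
def readL (δ : ℕ → S → S) (L : List ℕ) (s : S) : S := L.foldl (fun st d => δ d st) s

@[simp] lemma readL_nil (s : S) : readL δ [] s = s := rfl

lemma readL_append (u v : List ℕ) (s : S) : readL δ (u ++ v) s = readL δ v (readL δ u s) := by
  simp [readL, List.foldl_append]

lemma deltaW_reverse (L : List ℕ) (s : S) : deltaW δ L.reverse s = readL δ L s := by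
  induction L generalizing s with
  | nil => rfl
  | cons d t ih =>
    rw [List.reverse_cons, deltaW_append, readL]
    show deltaW δ t.reverse (δ d (deltaW δ [] s)) = _
    rw [deltaW_nil, ih]
    rfl

lemma deltaW_wpow_cycle {z : List ℕ} {s : S} (h : deltaW δ z s = s) (n : ℕ) :
    deltaW δ (wpow z n) s = s := by
  induction n with
  | zero => rfl
  | succ n ih => rw [wpow_succ, deltaW_append, ih, h]

lemma deltaW_flatten_cycle {bs : List (List ℕ)} {s : S} (h : ∀ b ∈ bs, deltaW δ b s = s) :
    deltaW δ bs.flatten s = s := by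
  induction bs with
  | nil => rfl
  | cons b t ih =>
    rw [List.flatten_cons, deltaW_append, ih (fun x hx => h x (List.mem_cons_of_mem _ hx)),
      h b (List.mem_cons_self)]

/-! ### common root of commuting words -/

lemma exists_common_root_aux : ∀ (n : ℕ) (x y : List ℕ), x.length + y.length ≤ n →
    x ++ y = y ++ x → ∃ (z : List ℕ) (i j : ℕ), x = wpow z i ∧ y = wpow z j := by
  intro n
  induction n with
  | zero =>
    intro x y hlen _
    have hx : x = [] := List.length_eq_zero_iff.mp (by omega)
    have hy : y = [] := List.length_eq_zero_iff.mp (by omega)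
    exact ⟨[], 0, 0, by simp [hx], by simp [hy]⟩
  | succ n ih =>
    intro x y hlen hcomm
    rcases eq_or_ne x [] with hx | hx
    · exact ⟨y, 0, 1, by simp [hx], by simp⟩
    rcases eq_or_ne y [] with hy | hy
    · exact ⟨x, 1, 0, by simp, by simp [hy]⟩
    have key : ∀ x y : List ℕ, x ≠ [] → x.length ≤ y.length → x ++ y = y ++ x →
        x.length + y.length ≤ n + 1 → ∃ (z : List ℕ) (i j : ℕ), x = wpow z i ∧ y = wpow z j := by
      intro x y hx hxy hcomm hlen
      have hpre : (x ++ y).take x.length = x := List.take_left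
      have hpre2 : (y ++ x).take x.length = y.take x.length :=
        List.take_append_of_le_length hxy
      have hxtake : y.take x.length = x := by rw [← hpre2, ← hcomm, hpre]
      have hysplit : y = x ++ y.drop x.length := by
        conv_lhs => rw [← List.take_append_drop x.length y, hxtake]
      set y' := y.drop x.length with hy'
      have hcomm2 : x ++ y' = y' ++ x := by
        have h2 : x ++ (x ++ y') = x ++ (y' ++ x) := by
          rw [← hysplit, hcomm, hysplit, List.append_assoc]
        exact List.append_cancel_left h2
      have hxpos : 0 < x.length := List.length_pos_iff.mpr hx
      have hylen : y'.length = y.length - x.length := by simp [hy']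
      obtain ⟨z, i, j, hxz, hyz⟩ := ih x y' (by omega) hcomm2
      exact ⟨z, i, i + j, hxz, by rw [hysplit, wpow_add, hxz, hyz]⟩
    rcases le_total x.length y.length with hle | hle
    · exact key x y hx hle hcomm hlen
    · obtain ⟨z, i, j, h1, h2⟩ := key y x hy hle hcomm.symm (by omega)
      exact ⟨z, j, i, h2, h1⟩

lemma exists_common_root (x y : List ℕ) (hcomm : x ++ y = y ++ x) :
    ∃ (z : List ℕ) (i j : ℕ), x = wpow z i ∧ y = wpow z j :=
  exists_common_root_aux (x.length + y.length) x y le_rfl hcomm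


/-! ### buildW and uvOf -/

def buildW : List (List ℕ × List ℕ) → (ℕ → ℕ) → List ℕ
  | [], _ => []
  | e :: rest, l => e.1 ++ wpow e.2 (l (rest.length + 1)) ++ buildW rest l

@[simp] lemma buildW_nil (l : ℕ → ℕ) : buildW [] l = [] := rfl

lemma buildW_cons (e : List ℕ × List ℕ) (rest : List (List ℕ × List ℕ)) (l : ℕ → ℕ) :
    buildW (e :: rest) l = e.1 ++ wpow e.2 (l (rest.length + 1)) ++ buildW rest l := rfl

lemma buildW_congr {ents : List (List ℕ × List ℕ)} {l₁ l₂ : ℕ → ℕ}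
    (h : ∀ i, 1 ≤ i → i ≤ ents.length → l₁ i = l₂ i) : buildW ents l₁ = buildW ents l₂ := by
  induction ents with
  | nil => rfl
  | cons e rest ih =>
    rw [buildW_cons, buildW_cons, h (rest.length + 1) (by omega) (by simp),
      ih (fun i h1 h2 => h i h1 (by simp; omega))]

lemma buildW_append (A B : List (List ℕ × List ℕ)) (l : ℕ → ℕ) :
    buildW (A ++ B) l = buildW A (fun i => l (i + B.length)) ++ buildW B l := by
  induction A with
  | nil => rfl
  | cons e A' ih =>
    rw [List.cons_append, buildW_cons, buildW_cons, ih]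
    have : (A' ++ B).length + 1 = A'.length + 1 + B.length := by simp; omega
    rw [this]; simp [List.append_assoc]

lemma buildW_snoc (ents : List (List ℕ × List ℕ)) (e : List ℕ × List ℕ) (l : ℕ → ℕ) :
    buildW (ents ++ [e]) l = buildW ents (fun i => l (i + 1)) ++ (e.1 ++ wpow e.2 (l 1)) := by
  rw [buildW_append]
  have h1 : buildW [e] l = e.1 ++ wpow e.2 (l 1) ++ [] := rfl
  rw [h1, List.append_nil]
  rfl

lemma isWord_buildW {ents : List (List ℕ × List ℕ)}
    (h : ∀ e ∈ ents, IsWord k e.1 ∧ IsWord k e.2) (l : ℕ → ℕ) : IsWord k (buildW ents l) := by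
  induction ents with
  | nil => intro d hd; simp [buildW] at hd
  | cons e rest ih =>
    rw [buildW_cons]
    exact isWord_append (isWord_append (h e (List.mem_cons_self)).1
      (isWord_wpow (h e (List.mem_cons_self)).2 _))
      (ih (fun x hx => h x (List.mem_cons_of_mem _ hx)))

def uvOf : List (List ℕ × List ℕ) → ℕ → List ℕ × List ℕ
  | [], _ => ([], [])
  | e :: rest, i => if i = rest.length + 1 then e else uvOf rest i

lemma uvOf_gt : ∀ (ents : List (List ℕ × List ℕ)) (i : ℕ), ents.length < i →
    uvOf ents i = ([], []) := by
  intro ents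
  induction ents with
  | nil => intro i _; rfl
  | cons e rest ih =>
    intro i hi
    show (if i = rest.length + 1 then e else uvOf rest i) = _
    rw [if_neg (by simp at hi; omega)]
    exact ih i (by simp at hi; omega)

lemma uvOf_zero (ents : List (List ℕ × List ℕ)) : uvOf ents 0 = ([], []) := by
  induction ents with
  | nil => rfl
  | cons e rest ih =>
    show (if 0 = rest.length + 1 then e else uvOf rest 0) = _
    rw [if_neg (by omega)]; exact ih

lemma uvOf_mem (ents : List (List ℕ × List ℕ)) (i : ℕ) :
    uvOf ents i = ([], []) ∨ uvOf ents i ∈ ents := by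
  induction ents with
  | nil => left; rfl
  | cons e rest ih =>
    by_cases h : i = rest.length + 1
    · right
      have he : uvOf (e :: rest) i = e := by
        show (if i = rest.length + 1 then e else uvOf rest i) = e
        rw [if_pos h]
      rw [he]; exact List.mem_cons_self
    · have he : uvOf (e :: rest) i = uvOf rest i := by
        show (if i = rest.length + 1 then e else uvOf rest i) = _
        rw [if_neg h]
      rw [he]
      rcases ih with h1 | h1
      · left; exact h1
      · right; exact List.mem_cons_of_mem _ h1

lemma aridWord_congr {u₁ v₁ u₂ v₂ : ℕ → List ℕ} {l : ℕ → ℕ} :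
    ∀ r, (∀ i, i ≤ r → u₁ i = u₂ i ∧ v₁ i = v₂ i) →
    aridWord u₁ v₁ l r = aridWord u₂ v₂ l r := by
  intro r
  induction r with
  | zero => intro h; show u₁ 0 = u₂ 0; exact (h 0 le_rfl).1
  | succ r ih =>
    intro h
    show u₁ (r+1) ++ wpow (v₁ (r+1)) (l (r+1)) ++ aridWord u₁ v₁ l r = _
    rw [(h (r+1) le_rfl).1, (h (r+1) le_rfl).2, ih (fun i hi => h i (by omega))]
    rfl

lemma aridWord_pad {u v : ℕ → List ℕ} {l : ℕ → ℕ} {r : ℕ}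
    (h : ∀ i, r < i → u i = [] ∧ v i = []) :
    ∀ R, r ≤ R → aridWord u v l R = aridWord u v l r := by
  intro R
  induction R with
  | zero => intro hR; rw [Nat.le_zero.mp hR]
  | succ R ih =>
    intro hR
    rcases eq_or_lt_of_le hR with h1 | h1
    · rw [h1]
    · have hr : r ≤ R := by omega
      show u (R+1) ++ wpow (v (R+1)) (l (R+1)) ++ aridWord u v l R = _
      rw [(h (R+1) (by omega)).1, (h (R+1) (by omega)).2, ih hr, wpow_nil]
      rfl

lemma aridWord_uvOf (ents : List (List ℕ × List ℕ)) (l : ℕ → ℕ) :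
    aridWord (fun i => (uvOf ents i).1) (fun i => (uvOf ents i).2) l ents.length
      = buildW ents l := by
  induction ents with
  | nil =>
    show (uvOf ([] : List (List ℕ × List ℕ)) 0).1 = _
    rfl
  | cons e rest ih =>
    show (uvOf (e :: rest) (rest.length + 1)).1
        ++ wpow (uvOf (e :: rest) (rest.length + 1)).2 (l (rest.length + 1))
        ++ aridWord _ _ l rest.length = _
    have h1 : uvOf (e :: rest) (rest.length + 1) = e := by
      show (if rest.length + 1 = rest.length + 1 then e else _) = e
      rw [if_pos rfl]
    have h2 : aridWord (fun i => (uvOf (e :: rest) i).1) (fun i => (uvOf (e :: rest) i).2) l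
        rest.length = aridWord (fun i => (uvOf rest i).1) (fun i => (uvOf rest i).2) l
        rest.length := by
      apply aridWord_congr
      intro i hi
      have : uvOf (e :: rest) i = uvOf rest i := by
        show (if i = rest.length + 1 then e else uvOf rest i) = _
        rw [if_neg (by omega)]
      rw [this]; exact ⟨rfl, rfl⟩
    rw [h1, h2, ih, buildW_cons]

/-! ### The pumping statement -/

def BStat (k : ℕ) (Zs : Set ℕ) : Prop :=
  ∃ u x y v : List ℕ, IsWord k x ∧ IsWord k y ∧ x ≠ y ∧ x.length = y.length ∧
    ∀ bs : List Bool, valk k (u ++ (bs.map (fun b => if b then x else y)).flatten ++ v) ∈ Zs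

lemma length_flatten_map {χ : Bool → List ℕ} {L : ℕ} (h : ∀ b, (χ b).length = L) :
    ∀ bs : List Bool, ((bs.map χ).flatten).length = bs.length * L := by
  intro bs
  induction bs with
  | nil => simp
  | cons b t ih => simp [ih, h b, Nat.succ_mul]; omega

end Aux

lemma bstat_false (k : ℕ) (hk : 2 ≤ k) (a : ℕ → ℂ) (hmul : IsMult a)
    (hsparse : {p : ℕ | p.Prime ∧ ∃ α : ℕ, 0 < α ∧ a (p ^ α) = 0}.Infinite)
    (hb : BStat k {n : ℕ | 0 < n ∧ a n ≠ 0}) : False := by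
  obtain ⟨u, x, y, v, hx, hy, hne, hlen, hall⟩ := hb
  have hk1 : 1 ≤ k := by omega
  have key : ∀ x y : List ℕ, IsWord k x → IsWord k y → x.length = y.length →
      valk k y < valk k x →
      (∀ bs : List Bool,
        valk k (u ++ (bs.map (fun b => if b then x else y)).flatten ++ v)
          ∈ {n : ℕ | 0 < n ∧ a n ≠ 0}) → False := by
    clear hx hy hne hlen hall x y
    intro x y hx hy hlen hlt hall
    set L := x.length with hL
    have hLpos : 1 ≤ L := by
      by_contra h
      have hx0 : x = [] := List.length_eq_zero_iff.mp (by omega)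
      have hy0 : y = [] := List.length_eq_zero_iff.mp (by omega)
      rw [hx0, hy0] at hlt
      exact lt_irrefl _ hlt
    -- choose a large prime
    obtain ⟨p, hpmem, hpgt⟩ := hsparse.exists_gt (k ^ L)
    obtain ⟨hp, α, hα, haz⟩ := hpmem
    set P := p ^ (α + 1) with hP
    haveI : NeZero P := ⟨pow_ne_zero _ hp.pos.ne'⟩
    have hkL : k ≤ k ^ L := Nat.le_self_pow (by omega) k
    have hpk : ¬ p ∣ k := fun hdvd => by
      have := Nat.le_of_dvd (by omega) hdvd; omega
    have hcopk : Nat.Coprime k P := Nat.Coprime.pow_right _ ((hp.coprime_iff_not_dvd.mpr hpk).symm)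
    have kU : IsUnit (k : ZMod P) := (ZMod.isUnit_iff_coprime k P).mpr hcopk
    set D := valk k x - valk k y with hD
    have hDpos : 0 < D := by omega
    have hvxlt : valk k x < k ^ L := by
      rw [hL]; exact valk_lt hk1 hx
    have hDlt : D < p := by omega
    have hpD : ¬ p ∣ D := fun hdvd => by
      have := Nat.le_of_dvd hDpos hdvd; omega
    have hcopD : Nat.Coprime D P := Nat.Coprime.pow_right _ ((hp.coprime_iff_not_dvd.mpr hpD).symm)
    have DU : IsUnit (D : ZMod P) := (ZMod.isUnit_iff_coprime D P).mpr hcopD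
    -- order of k^L
    set qu : (ZMod P)ˣ := kU.unit ^ L with hqu
    set o := orderOf qu with ho
    have hopos : 0 < o := orderOf_pos qu
    have hq1 : ((k : ZMod P) ^ L) ^ o = 1 := by
      have h1 : qu ^ o = 1 := pow_orderOf_eq_one qu
      have h2 := congrArg (fun (w : (ZMod P)ˣ) => (w : ZMod P)) h1
      simpa [hqu, kU.unit_spec] using h2
    set m := o * P with hm
    set χ : Bool → List ℕ := fun b => if b then x else y with hχ
    have hχlen : ∀ b, (χ b).length = L := by intro b; cases b <;> simp [hχ, hlen.symm] <;> exact hL.symm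
    set Bs : ℕ → List Bool := fun s =>
      List.replicate (m - o * s) false
        ++ (List.replicate s (true :: List.replicate (o - 1) false)).flatten with hBs
    set N : ℕ → ℕ := fun s => valk k (u ++ ((Bs s).map χ).flatten ++ v) with hN
    -- the value of a one-block change
    have hval : ∀ (A C : List Bool) (b : Bool),
        valk k (u ++ ((A ++ [b] ++ C).map χ).flatten ++ v)
          = valk k (u ++ (A.map χ).flatten) * k ^ (L + (C.length * L + v.length))
            + valk k (χ b) * k ^ (C.length * L + v.length)
            + valk k ((C.map χ).flatten ++ v) := by
      intro A C b
      have hsplit : u ++ ((A ++ [b] ++ C).map χ).flatten ++ v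
          = (u ++ (A.map χ).flatten) ++ (χ b ++ ((C.map χ).flatten ++ v)) := by
        simp [List.map_append, List.flatten_append, List.append_assoc]
      rw [hsplit, valk_append, valk_append]
      have hlC : ((C.map χ).flatten).length = C.length * L := length_flatten_map hχlen C
      simp [List.length_append, hlC, hχlen b, valk_append]
      ring
    -- decompositions of Bs
    have hBdec1 : ∀ s, s < P → Bs (s + 1) = List.replicate (m - o * (s + 1)) false
        ++ [true] ++ (List.replicate (o - 1) false
          ++ (List.replicate s (true :: List.replicate (o - 1) false)).flatten) := by
      intro s hs
      show List.replicate (m - o * (s+1)) false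
          ++ (List.replicate (s+1) (true :: List.replicate (o - 1) false)).flatten = _
      rw [List.replicate_succ, List.flatten_cons]
      simp [List.append_assoc]
    have hBdec0 : ∀ s, s < P → Bs s = List.replicate (m - o * (s + 1)) false
        ++ [false] ++ (List.replicate (o - 1) false
          ++ (List.replicate s (true :: List.replicate (o - 1) false)).flatten) := by
      intro s hs
      have hmod : m - o * s = (m - o * (s + 1)) + o := by
        have h1 : o * (s + 1) ≤ m := by
          rw [hm]; exact Nat.mul_le_mul_left o hs
        have h2 : o * (s + 1) = o * s + o := by ring
        omega
      show List.replicate (m - o * s) false ++ _ = _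
      rw [hmod, List.replicate_add]
      have : List.replicate o false = [false] ++ List.replicate (o - 1) false := by
        have : o = 1 + (o - 1) := by omega
        rw [this, List.replicate_add]
        simp
      rw [this]
      simp [List.append_assoc]
    -- step identity over ℕ
    have hCl : ∀ s, (List.replicate (o - 1) false
        ++ (List.replicate s (true :: List.replicate (o - 1) false)).flatten).length
          = (o - 1) + s * o := by
      intro s
      simp [List.length_replicate, List.length_flatten, List.map_replicate, List.sum_replicate,
        smul_eq_mul]
      omega
    have hstep : ∀ s, s < P → N (s + 1) + valk k y * k ^ (((o - 1) + s * o) * L + v.length)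
        = N s + valk k x * k ^ (((o - 1) + s * o) * L + v.length) := by
      intro s hs
      have h1 : N (s + 1) = valk k (u ++ ((List.replicate (m - o * (s+1)) false).map χ).flatten)
            * k ^ (L + (((o - 1) + s * o) * L + v.length))
          + valk k x * k ^ (((o - 1) + s * o) * L + v.length)
          + valk k (((List.replicate (o - 1) false
              ++ (List.replicate s (true :: List.replicate (o - 1) false)).flatten).map χ).flatten
            ++ v) := by
        rw [hN]
        show valk k (u ++ ((Bs (s+1)).map χ).flatten ++ v) = _
        rw [hBdec1 s hs, hval, hCl s]
        simp [hχ]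
      have h0 : N s = valk k (u ++ ((List.replicate (m - o * (s+1)) false).map χ).flatten)
            * k ^ (L + (((o - 1) + s * o) * L + v.length))
          + valk k y * k ^ (((o - 1) + s * o) * L + v.length)
          + valk k (((List.replicate (o - 1) false
              ++ (List.replicate s (true :: List.replicate (o - 1) false)).flatten).map χ).flatten
            ++ v) := by
        rw [hN]
        show valk k (u ++ ((Bs s).map χ).flatten ++ v) = _
        rw [hBdec0 s hs, hval, hCl s]
        simp [hχ]
      omega
    -- step identity in ZMod P
    set E : ZMod P := (D : ZMod P) * (k : ZMod P) ^ ((o - 1) * L + v.length) with hE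
    have hstepZ : ∀ s, s < P → ((N (s + 1) : ZMod P)) = N s + E := by
      intro s hs
      have h := hstep s hs
      have hc := congrArg (fun t : ℕ => (t : ZMod P)) h
      push_cast at hc
      have hpow : ((k : ZMod P)) ^ (((o - 1) + s * o) * L + v.length)
          = (k : ZMod P) ^ ((o - 1) * L + v.length) := by
        have hexp : ((o - 1) + s * o) * L + v.length
            = ((o - 1) * L + v.length) + (L * o) * s := by ring
        rw [hexp, pow_add, pow_mul, pow_mul]
        have : ((k : ZMod P) ^ L) ^ o = 1 := hq1
        rw [this, one_pow, mul_one]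
      rw [hpow] at hc
      have hDcast : ((D : ℕ) : ZMod P) = (valk k x : ZMod P) - valk k y := by
        rw [hD, Nat.cast_sub (le_of_lt hlt)]
      have : (N (s+1) : ZMod P) = N s + ((valk k x : ZMod P) - valk k y)
          * (k : ZMod P) ^ ((o - 1) * L + v.length) := by
        have := hc
        ring_nf at this ⊢
        linear_combination this
      rw [this, hE, hDcast]
    have hiter : ∀ s, s ≤ P → (N s : ZMod P) = N 0 + s * E := by
      intro s
      induction s with
      | zero => intro _; simp
      | succ s ih =>
        intro hs
        rw [hstepZ s (by omega), ih (by omega)]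
        push_cast
        ring
    -- choose s hitting the residue p^α
    have EU : IsUnit E := by
      rw [hE]
      exact DU.mul (kU.pow _)
    obtain ⟨eu, heu⟩ := EU
    have hsolv : ∃ s' : ZMod P, N 0 + s' * E = ((p ^ α : ℕ) : ZMod P) := by
      refine ⟨(((p ^ α : ℕ) : ZMod P) - N 0) * (eu⁻¹ : (ZMod P)ˣ), ?_⟩
      rw [mul_assoc]
      have : ((eu⁻¹ : (ZMod P)ˣ) : ZMod P) * E = 1 := by
        rw [← heu]
        exact Units.inv_mul eu
      rw [this, mul_one]
      ring
    obtain ⟨s', hs'⟩ := hsolv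
    set s := s'.val with hsv
    have hsP : s < P := ZMod.val_lt s'
    have hcast : ((s : ℕ) : ZMod P) = s' := ZMod.natCast_rightInverse s'
    have hNs : (N s : ZMod P) = ((p ^ α : ℕ) : ZMod P) := by
      rw [hiter s (le_of_lt hsP), hcast, hs']
    -- extract congruence
    have hmodeq : N s % P = p ^ α % P := (ZMod.natCast_eq_natCast_iff' _ _ _).mp hNs
    have hpaP : p ^ α < P := by
      rw [hP]
      exact Nat.pow_lt_pow_right hp.one_lt (by omega)
    have hpa : p ^ α % P = p ^ α := Nat.mod_eq_of_lt hpaP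
    rw [hpa] at hmodeq
    -- membership
    have hmem := hall (Bs s)
    have hNpos : 0 < N s := hmem.1
    have haN : a (N s) ≠ 0 := hmem.2
    -- divisibility
    have hdvd : p ^ α ∣ N s := by
      have h1 : N s = P * (N s / P) + p ^ α := by
        conv_lhs => rw [← Nat.div_add_mod (N s) P]
        rw [hmodeq]
      rw [h1]
      exact Nat.dvd_add (Dvd.dvd.mul_right (pow_dvd_pow p (by omega)) _) dvd_rfl
    set M := N s / p ^ α with hMdef
    have hNM : N s = p ^ α * M := (Nat.mul_div_cancel' hdvd).symm
    have hMpos : 0 < M := by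
      rcases Nat.eq_zero_or_pos M with h0 | h1
      · rw [h0, Nat.mul_zero] at hNM; omega
      · exact h1
    have hpM : ¬ p ∣ M := by
      intro hdvdM
      obtain ⟨M', hM'⟩ := hdvdM
      have : P ∣ N s := by
        rw [hNM, hM', hP]
        exact ⟨M', by ring⟩
      have h0 : N s % P = 0 := Nat.mod_eq_zero_of_dvd this
      have hppos : 0 < p ^ α := pow_pos hp.pos α
      omega
    have hcop : Nat.Coprime (p ^ α) M := Nat.Coprime.pow_left _ (hp.coprime_iff_not_dvd.mpr hpM)
    have := hmul (p ^ α) M (pow_pos hp.pos _) hMpos hcop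
    rw [← hNM, haz, zero_mul] at this
    exact haN this
  -- symmetrize
  have hvne : valk k x ≠ valk k y := by
    intro h
    exact hne (valk_inj hk1 hx hy hlen h)
  rcases Nat.lt_or_ge (valk k y) (valk k x) with hlt | hge
  · exact key x y hx hy hlen hlt hall
  · have hlt : valk k x < valk k y := by omega
    apply key y x hy hx hlen.symm hlt
    intro bs
    have h1 : (bs.map (fun b => if b then y else x)) =
        ((bs.map not).map (fun b => if b then x else y)) := by
      rw [List.map_map]
      apply List.map_congr_left
      intro b _
      cases b <;> rfl
    rw [h1]
    exact hall (bs.map not)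

lemma main_dichotomy {S : Type} [Fintype S] (k : ℕ) (hk : 2 ≤ k) (s₀ : S) (δ : ℕ → S → S)
    (τ : S → ℂ) (Zs : Set ℕ)
    (hZpos : ∀ n ∈ Zs, 0 < n)
    (hmem : ∀ w : List ℕ, IsWord k w → NoLeadZero w → w ≠ [] →
      (valk k w ∈ Zs ↔ τ (deltaW δ w s₀) ≠ 0))
    (hnb : ¬ BStat k Zs) : Arid k Zs := by
  classical
  have hk1 : 1 ≤ k := by omega
  -- canonical choice of a nonempty cycle at each state (when one exists)
  have hc0ex : ∀ s : S, ∃ c0 : List ℕ, IsWord k c0 ∧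
      ((∃ c, c ≠ [] ∧ IsWord k c ∧ deltaW δ c s = s) → (c0 ≠ [] ∧ deltaW δ c0 s = s)) := by
    intro s
    by_cases h : ∃ c, c ≠ [] ∧ IsWord k c ∧ deltaW δ c s = s
    · obtain ⟨c, h1, h2, h3⟩ := h
      exact ⟨c, h2, fun _ => ⟨h1, h3⟩⟩
    · exact ⟨[], by intro d hd; simp at hd, fun hh => absurd hh h⟩
  choose c0fn hc0w hc0spec using hc0ex
  set a0fn : S → List ℕ → ℕ :=
    fun s z => sInf {e | 0 < e ∧ deltaW δ (wpow z e) s = s} with ha0fn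
  set mresfn : S → List ℕ → ℕ → ℕ :=
    fun s z c => sInf {e | deltaW δ (wpow z e) s = s ∧ e % a0fn s z = c} with hmresfn
  set B : ℕ := Finset.univ.sup (fun s : S => (c0fn s).length) with hB
  have hBle : ∀ s : S, (c0fn s).length ≤ B := fun s =>
    Finset.le_sup (f := fun s : S => (c0fn s).length) (Finset.mem_univ s)
  set Gfun : S × Fin (B + 1) × Fin 3 × Fin (B + 1) × Option (Fin k) → List ℕ :=
    fun q => (q.2.2.2.2.elim [] fun d => [(d : ℕ)]) ++
      wpow ((c0fn q.1).take (q.2.1 : ℕ))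
        (if (q.2.2.1 : ℕ) = 1 then a0fn q.1 ((c0fn q.1).take (q.2.1 : ℕ))
          else if (q.2.2.1 : ℕ) = 2 then
            mresfn q.1 ((c0fn q.1).take (q.2.1 : ℕ)) (q.2.2.2.1 : ℕ) else 0) with hGfun
  set G : Set (List ℕ) := Set.range Gfun with hG
  have hGfin : G.Finite := Set.finite_range _
  have hGword : ∀ w ∈ G, IsWord k w := by
    rintro w ⟨q, rfl⟩
    apply isWord_append
    · rcases q.2.2.2.2 with _ | d
      · intro d hd; simp at hd
      · intro e he
        simp [Option.elim] at he
        rw [he]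
        exact d.isLt
    · exact isWord_wpow (isWord_sublist (hc0w q.1) (fun d hd => List.mem_of_mem_take hd)) _
  have hGnil : ([] : List ℕ) ∈ G := by
    refine ⟨(s₀, ⟨0, by omega⟩, ⟨0, by omega⟩, ⟨0, by omega⟩, none), ?_⟩
    simp [hGfun]
  have hGletter : ∀ d : ℕ, d < k → [d] ∈ G := by
    intro d hd
    refine ⟨(s₀, ⟨0, by omega⟩, ⟨0, by omega⟩, ⟨0, by omega⟩, some ⟨d, hd⟩), ?_⟩
    simp [hGfun]
  set R : ℕ := Fintype.card S with hR
  set famOf : (ℕ → List ℕ) × (ℕ → List ℕ) → Set ℕ :=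
    fun q => {n | ∃ l : ℕ → ℕ, n = valk k (aridWord q.1 q.2 l R)} with hfamOf
  set F : Set ((ℕ → List ℕ) × (ℕ → List ℕ)) :=
    {q | (∀ i, q.1 i ∈ G ∧ q.2 i ∈ G) ∧ (∀ i, R < i → q.1 i = [] ∧ q.2 i = []) ∧
      famOf q ⊆ Zs} with hF
  have hFfin : F.Finite := by
    apply Set.Finite.of_finite_image
      (f := fun q (i : Fin (R + 1)) => (q.1 (i : ℕ), q.2 (i : ℕ)))
    · apply Set.Finite.subset
        (Set.Finite.pi (fun _ : Fin (R + 1) => hGfin.prod hGfin))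
      rintro f ⟨q, hq, rfl⟩
      intro i _
      exact ⟨(hq.1 i).1, (hq.1 i).2⟩
    · rintro q hq q' hq' heq
      have hco : ∀ i : ℕ, i ≤ R → q.1 i = q'.1 i ∧ q.2 i = q'.2 i := by
        intro i hi
        have := congrFun heq ⟨i, by omega⟩
        exact ⟨congrArg Prod.fst this, congrArg Prod.snd this⟩
      have h1 : q.1 = q'.1 := by
        funext i
        rcases le_or_gt i R with h | h
        · exact (hco i h).1
        · rw [(hq.2.1 i h).1, (hq'.2.1 i h).1]
      have h2 : q.2 = q'.2 := by
        funext i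
        rcases le_or_gt i R with h | h
        · exact (hco i h).2
        · rw [(hq.2.1 i h).2, (hq'.2.1 i h).2]
      exact Prod.ext h1 h2
  -- the covering claim
  have hcover : ∀ n ∈ Zs, ∃ q ∈ F, n ∈ famOf q := by
    intro n hnZ
    have hn0 : n ≠ 0 := (hZpos n hnZ).ne'
    set X : List ℕ := Nat.digits k n with hX
    have hXne : X ≠ [] := Nat.digits_ne_nil_iff_ne_zero.mpr hn0
    have hXword : IsWord k X := fun d hd => Nat.digits_lt_base (by omega) hd
    have hXlast : X.getLast hXne ≠ 0 := Nat.getLast_digit_ne_zero k hn0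
    have hvalX : valk k X.reverse = n := by rw [valk_reverse, hX, Nat.ofDigits_digits]
    set σ : ℕ → S := fun i => readL δ (X.take i) s₀ with hσ
    have hσ0 : σ 0 = s₀ := by simp [hσ, readL]
    have hσfull : σ X.length = readL δ X s₀ := by simp [hσ]
    have hσsucc : ∀ i (h : i < X.length), σ (i + 1) = δ (X[i]'h) (σ i) := by
      intro i h
      have hts : X.take (i + 1) = X.take i ++ [X[i]'h] := by
        rw [List.take_succ, List.getElem?_eq_getElem h]
        rfl
      show readL δ (X.take (i + 1)) s₀ = _
      rw [hts, readL_append]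
      rfl
    have hXrevne : X.reverse ≠ [] := by simpa using hXne
    have hXrevNLZ : NoLeadZero X.reverse := by
      rw [noLeadZero_iff]
      intro d hd
      rw [List.head?_reverse, List.getLast?_eq_getLast_of_ne_nil hXne] at hd
      exact (Option.some_inj.mp hd) ▸ hXlast
    have hτfin : τ (σ X.length) ≠ 0 := by
      have h := (hmem X.reverse (fun d hd => hXword d (List.mem_reverse.mp hd))
        hXrevNLZ hXrevne).mp (by rw [hvalX]; exact hnZ)
      rw [deltaW_reverse] at h
      rw [hσfull]
      exact h
    have hdropNLZ : ∀ j, j < X.length →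
        (X.drop j).reverse ≠ [] ∧ NoLeadZero ((X.drop j).reverse) := by
      intro j hj
      have hne : X.drop j ≠ [] := by
        intro h
        have := congrArg List.length h
        simp at this
        omega
      constructor
      · simpa using hne
      · rw [noLeadZero_iff]
        intro d hd
        rw [List.head?_reverse] at hd
        have hgl : (X.drop j).getLast? = X.getLast? := by
          conv_rhs => rw [← List.take_append_drop j X]
          rw [List.getLast?_append_of_ne_nil _ hne]
        rw [hgl, List.getLast?_eq_getLast_of_ne_nil hXne] at hd
        exact (Option.some_inj.mp hd) ▸ hXlast
    have hreadfull : ∀ j, readL δ (X.drop j) (σ j) = σ X.length := by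
      intro j
      rw [hσfull]
      conv_rhs => rw [← List.take_append_drop j X]
      rw [readL_append]
    -- commuting of cycles
    have hcomm : ∀ j, j < X.length → ∀ c1 c2 : List ℕ, IsWord k c1 → IsWord k c2 →
        deltaW δ c1 (σ j) = σ j → deltaW δ c2 (σ j) = σ j → c1 ++ c2 = c2 ++ c1 := by
      intro j hj c1 c2 w1 w2 d1 d2
      by_contra hne
      apply hnb
      refine ⟨(X.drop j).reverse, c1 ++ c2, c2 ++ c1, (X.take j).reverse,
        isWord_append w1 w2, isWord_append w2 w1, hne, by simp [Nat.add_comm], ?_⟩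
      intro bs
      set w := (X.drop j).reverse ++
        (bs.map fun b => if b then c1 ++ c2 else c2 ++ c1).flatten ++ (X.take j).reverse
        with hw
      have hword : IsWord k w := by
        apply isWord_append
        apply isWord_append
        · exact fun d hd => hXword d (List.mem_of_mem_drop (List.mem_reverse.mp hd))
        · intro d hd
          rw [List.mem_flatten] at hd
          obtain ⟨b, hb1, hb2⟩ := hd
          rw [List.mem_map] at hb1
          obtain ⟨bb, _, rfl⟩ := hb1
          cases bb <;> simp at hb2 <;> rcases hb2 with h | h
          · exact w2 d h
          · exact w1 d h
          · exact w1 d h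
          · exact w2 d h
        · exact fun d hd => hXword d (List.mem_of_mem_take (List.mem_reverse.mp hd))
      have hwne : w ≠ [] := by
        rw [hw]
        intro hcon
        have := (hdropNLZ j hj).1
        simp at hcon
        exact this (by simp [hcon.1])
      have hwNLZ : NoLeadZero w := by
        rw [hw, List.append_assoc]
        exact noLeadZero_append_left (hdropNLZ j hj).2 (hdropNLZ j hj).1
      apply (hmem w hword hwNLZ hwne).mpr
      have hwdel : deltaW δ w s₀ = σ X.length := by
        rw [hw, deltaW_append, deltaW_append, deltaW_reverse, deltaW_reverse]
        have h1 : readL δ (X.take j) s₀ = σ j := rfl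
        rw [h1]
        have h2 : deltaW δ (bs.map fun b => if b then c1 ++ c2 else c2 ++ c1).flatten (σ j)
            = σ j := by
          apply deltaW_flatten_cycle
          intro b hb
          rw [List.mem_map] at hb
          obtain ⟨bb, _, rfl⟩ := hb
          cases bb
          · show deltaW δ (c2 ++ c1) (σ j) = σ j
            rw [deltaW_append, d1, d2]
          · show deltaW δ (c1 ++ c2) (σ j) = σ j
            rw [deltaW_append, d2, d1]
        rw [h2]
        exact hreadfull j
      rw [hwdel]
      exact hτfin
    -- the decomposition induction
    have QLem : ∀ t j, j ≤ X.length → X.length - j ≤ t →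
        ∃ ents : List (List ℕ × List ℕ), ∃ sts : List S,
          ents.length = sts.length ∧ sts.Nodup ∧
          (∀ s ∈ sts, ∃ i, j ≤ i ∧ i ≤ X.length ∧ σ i = s) ∧
          (∀ e ∈ ents, e.1 ∈ G ∧ e.2 ∈ G) ∧
          (∃ l : ℕ → ℕ, buildW ents l = (X.drop j).reverse) ∧
          (∀ l : ℕ → ℕ, deltaW δ (buildW ents l) (σ j) = σ X.length) ∧
          (∀ l : ℕ → ℕ, NoLeadZero (buildW ents l)) ∧
          (j < X.length → ∀ l : ℕ → ℕ, buildW ents l ≠ []) := by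
      intro t
      induction t with
      | zero =>
        intro j hj hjt
        have hjX : j = X.length := by omega
        subst hjX
        refine ⟨[], [], rfl, List.nodup_nil, by simp, by simp, ⟨fun _ => 0, by simp⟩,
          fun l => by simp, fun l => trivial, fun h => absurd h (by omega)⟩
      | succ t ih =>
        intro j hj hjt
        by_cases hj2 : X.length - j ≤ t
        · exact ih j hj hj2
        have hjlt : j < X.length := by omega
        set Rset : Finset ℕ :=
          (Finset.range (X.length + 1)).filter (fun i => j ≤ i ∧ σ i = σ j) with hRset
        have hRne : Rset.Nonempty := by
          refine ⟨j, ?_⟩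
          rw [hRset, Finset.mem_filter, Finset.mem_range]
          exact ⟨by omega, le_rfl, rfl⟩
        set J := Rset.max' hRne with hJdef
        have hJmem : j ≤ J ∧ J ≤ X.length ∧ σ J = σ j := by
          have h1 : J ∈ Rset := Rset.max'_mem hRne
          rw [hRset, Finset.mem_filter, Finset.mem_range] at h1
          exact ⟨h1.2.1, by omega, h1.2.2⟩
        have hJmax : ∀ i, j ≤ i → i ≤ X.length → σ i = σ j → i ≤ J := by
          intro i h1 h2 h3
          refine Rset.le_max' i ?_
          rw [hRset, Finset.mem_filter, Finset.mem_range]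
          exact ⟨by omega, h1, h3⟩
        set C : List ℕ := ((X.drop j).take (J - j)).reverse with hC
        have htakeJ : X.take J = X.take j ++ (X.drop j).take (J - j) := by
          conv_lhs => rw [show J = j + (J - j) by omega]
          rw [List.take_add]
        have hCcyc : deltaW δ C (σ j) = σ j := by
          rw [hC, deltaW_reverse]
          have h2 : σ J = readL δ ((X.drop j).take (J - j)) (σ j) := by
            show readL δ (X.take J) s₀ = _
            rw [htakeJ, readL_append]
          rw [← h2, hJmem.2.2]
        have hCword : IsWord k C := by
          apply isWord_sublist hXword
          intro d hd
          rw [hC, List.mem_reverse] at hd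
          exact List.mem_of_mem_drop (List.mem_of_mem_take hd)
        -- helper: cycle data when C ≠ []
        have cycData : C ≠ [] → ∃ (z : List ℕ) (e : ℕ),
            z ≠ [] ∧ 0 < e ∧ IsWord k z ∧ C = wpow z e ∧
            z.length ≤ (c0fn (σ j)).length ∧ (c0fn (σ j)).take z.length = z ∧
            (0 < a0fn (σ j) z ∧ deltaW δ (wpow z (a0fn (σ j) z)) (σ j) = σ j) ∧
            a0fn (σ j) z ≤ (c0fn (σ j)).length := by
          intro hCne
          have hc0s := hc0spec (σ j) ⟨C, hCne, hCword, hCcyc⟩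
          have hcm : C ++ c0fn (σ j) = c0fn (σ j) ++ C :=
            hcomm j hjlt C (c0fn (σ j)) hCword (hc0w _) hCcyc hc0s.2
          obtain ⟨z, e, jz, hCz, hc0z⟩ := exists_common_root C (c0fn (σ j)) hcm
          have hzne : z ≠ [] := by
            intro h
            rw [h, wpow_nil] at hCz
            exact hCne hCz
          have hepos : 0 < e := by
            rcases Nat.eq_zero_or_pos e with h | h
            · rw [h, wpow_zero] at hCz; exact absurd hCz hCne
            · exact h
          have hjzpos : 0 < jz := by
            rcases Nat.eq_zero_or_pos jz with h | h
            · rw [h, wpow_zero] at hc0z; exact absurd hc0z hc0s.1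
            · exact h
          have hc0split : c0fn (σ j) = z ++ wpow z (jz - 1) := by
            rw [hc0z]
            conv_lhs => rw [show jz = 1 + (jz - 1) by omega]
            rw [wpow_add, wpow_one]
          have hztake : (c0fn (σ j)).take z.length = z := by
            rw [hc0split]; exact List.take_left
          have hzlen : z.length ≤ (c0fn (σ j)).length := by
            rw [hc0split]
            simp only [List.length_append]
            omega
          have hzword : IsWord k z := by
            apply isWord_sublist hCword
            intro d hd
            rw [hCz, show e = 1 + (e - 1) by omega, wpow_add, wpow_one]
            exact List.mem_append_left _ hd
          have hA_jz : deltaW δ (wpow z jz) (σ j) = σ j := by rw [← hc0z]; exact hc0s.2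
          have ha0mem : 0 < a0fn (σ j) z ∧ deltaW δ (wpow z (a0fn (σ j) z)) (σ j) = σ j := by
            have hne : {e | 0 < e ∧ deltaW δ (wpow z e) (σ j) = σ j}.Nonempty :=
              ⟨jz, hjzpos, hA_jz⟩
            have := Nat.sInf_mem hne
            exact this
          have ha0le : a0fn (σ j) z ≤ jz := Nat.sInf_le ⟨hjzpos, hA_jz⟩
          have hjzle : jz ≤ (c0fn (σ j)).length := by
            have : (c0fn (σ j)).length = jz * z.length := by
              rw [hc0z, length_wpow]
            rw [this]
            exact Nat.le_mul_of_pos_right _ (List.length_pos_iff.mpr hzne)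
          exact ⟨z, e, hzne, hepos, hzword, hCz, hzlen, hztake, ha0mem, by omega⟩
        -- mres data for a given z and e
        have mresData : ∀ (z : List ℕ) (e : ℕ), 0 < a0fn (σ j) z →
            deltaW δ (wpow z (a0fn (σ j) z)) (σ j) = σ j →
            deltaW δ (wpow z e) (σ j) = σ j →
            deltaW δ (wpow z (mresfn (σ j) z (e % a0fn (σ j) z))) (σ j) = σ j ∧
            mresfn (σ j) z (e % a0fn (σ j) z) % a0fn (σ j) z = e % a0fn (σ j) z ∧
            mresfn (σ j) z (e % a0fn (σ j) z) ≤ e := by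
          intro z e ha0pos ha0cyc hecyc
          have hne : {e' | deltaW δ (wpow z e') (σ j) = σ j ∧
              e' % a0fn (σ j) z = e % a0fn (σ j) z}.Nonempty := ⟨e, hecyc, rfl⟩
          have hmem' := Nat.sInf_mem hne
          exact ⟨hmem'.1, hmem'.2, Nat.sInf_le ⟨hecyc, rfl⟩⟩
        rcases eq_or_lt_of_le hJmem.2.1 with hJX | hJX
        · -- CASE A : J = X.length (topmost, no letter above)
          have hCfull : C = (X.drop j).reverse := by
            rw [hC]
            congr 1
            apply List.take_of_length_le
            simp
            omega
          have hCne : C ≠ [] := by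
            rw [hCfull]
            exact (hdropNLZ j hjlt).1
          obtain ⟨z, e, hzne, hepos, hzword, hCz, hzlen, hztake, ha0mem, ha0le⟩ := cycData hCne
          obtain ⟨hmrescyc, hmresmod, hmresle⟩ := mresData z e ha0mem.1 ha0mem.2
            (by rw [← hCz]; exact hCcyc)
          set a0 := a0fn (σ j) z with ha0
          set c := e % a0 with hc'
          set mres := mresfn (σ j) z c with hmres
          have hclt : c < a0 := by rw [hc']; exact Nat.mod_lt _ ha0mem.1
          set m' := if mres = 0 then a0 else mres with hm'
          have hm'pos : 0 < m' := by
            rw [hm']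
            split
            · exact ha0mem.1
            · omega
          have hm'cyc : deltaW δ (wpow z m') (σ j) = σ j := by
            rw [hm']
            split
            · exact ha0mem.2
            · exact hmrescyc
          have hrep : ∃ t0, e = m' + a0 * t0 := by
            rw [hm']
            by_cases h0 : mres = 0
            · rw [if_pos h0]
              have hmod0 : e % a0 = 0 := by
                have h1 := hmresmod
                rw [h0] at h1
                simp at h1
                omega
              obtain ⟨q, hq⟩ := Nat.dvd_of_mod_eq_zero hmod0
              have hq1 : 1 ≤ q := by
                rcases Nat.eq_zero_or_pos q with h | h
                · rw [h, Nat.mul_zero] at hq; omega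
                · exact h
              refine ⟨q - 1, ?_⟩
              rw [hq]
              conv_lhs => rw [show q = (q - 1) + 1 by omega]
              ring
            · rw [if_neg h0]
              have hdvd : a0 ∣ e - mres := by
                apply (Nat.modEq_iff_dvd' hmresle).mp
                show mres % a0 = e % a0
                rw [hmresmod, hc']
              obtain ⟨q, hq⟩ := hdvd
              exact ⟨q, by omega⟩
          obtain ⟨t0, ht0⟩ := hrep
          -- membership of constructed words in G
          have hGa0 : wpow z a0 ∈ G := by
            refine ⟨(σ j, ⟨z.length, by have := hBle (σ j); omega⟩, ⟨1, by omega⟩,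
              ⟨0, by omega⟩, none), ?_⟩
            simp only [hGfun, Option.elim]
            rw [hztake]
            simp [ha0]
          have hGm' : wpow z m' ∈ G := by
            rw [hm']
            by_cases h0 : mres = 0
            · rw [if_pos h0]; exact hGa0
            · rw [if_neg h0]
              refine ⟨(σ j, ⟨z.length, by have := hBle (σ j); omega⟩, ⟨2, by omega⟩,
                ⟨c, by have := hBle (σ j); omega⟩, none), ?_⟩
              simp only [hGfun, Option.elim]
              rw [hztake]
              simp [hmres]
          refine ⟨[(wpow z m', wpow z a0)], [σ j], rfl, List.nodup_singleton _, ?_, ?_, ?_,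
            ?_, ?_, ?_⟩
          · intro s hs
            rw [List.mem_singleton] at hs
            exact ⟨j, le_rfl, by omega, hs.symm ▸ rfl⟩
          · intro ent hent
            rw [List.mem_singleton] at hent
            rw [hent]
            exact ⟨hGm', hGa0⟩
          · refine ⟨fun _ => t0, ?_⟩
            show wpow z m' ++ wpow (wpow z a0) t0 ++ [] = (X.drop j).reverse
            rw [List.append_nil, ← wpow_mul, ← wpow_add, ← ht0, ← hCz, hCfull]
          · intro l
            show deltaW δ (wpow z m' ++ wpow (wpow z a0) (l (0 + 1)) ++ []) (σ j) = σ X.length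
            rw [List.append_nil, deltaW_append]
            have h1 : deltaW δ (wpow (wpow z a0) (l (0 + 1))) (σ j) = σ j :=
              deltaW_wpow_cycle ha0mem.2 _
            rw [h1, hm'cyc, ← hJX, hJmem.2.2]
          · intro l
            show NoLeadZero (wpow z m' ++ wpow (wpow z a0) (l (0 + 1)) ++ [])
            have hzNLZ : NoLeadZero z := by
              apply noLeadZero_of_prefix (w := wpow z (e - 1)) _ hzne
              have h1 : z ++ wpow z (e - 1) = wpow z e := by
                conv_rhs => rw [show e = 1 + (e - 1) by omega]
                rw [wpow_add, wpow_one]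
              rw [h1, ← hCz, hCfull]
              exact (hdropNLZ j hjlt).2
            rw [show m' = 1 + (m' - 1) by omega, wpow_add, wpow_one, List.append_assoc,
              List.append_assoc]
            exact noLeadZero_append_left hzNLZ hzne
          · intro _ l
            show wpow z m' ++ wpow (wpow z a0) (l (0 + 1)) ++ [] ≠ []
            rw [List.append_nil]
            intro hcon
            have heq : wpow z m' = [] := by
              rcases List.append_eq_nil_iff.mp hcon with ⟨h1, _⟩
              exact h1
            rw [show m' = 1 + (m' - 1) by omega, wpow_add, wpow_one] at heq
            rcases List.append_eq_nil_iff.mp heq with ⟨h1, _⟩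
            exact hzne h1
        · -- CASE B : J < X.length
          set d : ℕ := X[J]'hJX with hd
          have hdlt : d < k := hXword d (by rw [hd]; exact List.getElem_mem _)
          have hσJ1 : σ (J + 1) = δ d (σ J) := hσsucc J hJX
          have hdropJ : X.drop J = d :: X.drop (J + 1) := List.drop_eq_getElem_cons hJX
          obtain ⟨ents', sts', hlen', hnodup', hsts', hG', ⟨l', hl'⟩, hδ', hNLZ', hne'⟩ :=
            ih (J + 1) (by omega) (by omega)
          have hσjnot : σ j ∉ sts' := by
            intro hin
            obtain ⟨i, hi1, hi2, hi3⟩ := hsts' (σ j) hin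
            have := hJmax i (by omega) hi2 hi3
            omega
          have hdropsplit : X.drop j = ((X.drop j).take (J - j)) ++ (d :: X.drop (J + 1)) := by
            conv_lhs => rw [← List.take_append_drop (J - j) (X.drop j)]
            rw [List.drop_drop, show j + (J - j) = J by omega, hdropJ]
          have hnodupNew : (sts' ++ [σ j]).Nodup := by
            refine List.Nodup.append hnodup' (List.nodup_singleton _) ?_
            intro a ha hb
            rw [List.mem_singleton] at hb
            subst hb
            exact hσjnot ha
          have hstsNew : ∀ s ∈ sts' ++ [σ j], ∃ i, j ≤ i ∧ i ≤ X.length ∧ σ i = s := by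
            intro s hs
            rcases List.mem_append.mp hs with h | h
            · obtain ⟨i, h1, h2, h3⟩ := hsts' s h
              exact ⟨i, by omega, h2, h3⟩
            · rw [List.mem_singleton] at h
              exact ⟨j, le_rfl, by omega, h ▸ rfl⟩
          have hdlast : J + 1 = X.length → d ≠ 0 := by
            intro hJ1
            have hgl : X.getLast hXne = X[J]'hJX := by
              rw [List.getLast_eq_getElem]
              congr 1
              omega
            rw [hd, ← hgl]
            exact hXlast
          by_cases hCne : C = []
          · -- C empty, J = j : single-letter entry
            have htk0 : (X.drop j).take (J - j) = [] := by
              have h := hCne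
              rw [hC] at h
              exact List.reverse_eq_nil_iff.mp h
            have hdropj : X.drop j = d :: X.drop (J + 1) := by
              conv_lhs => rw [hdropsplit, htk0]
              rfl
            refine ⟨ents' ++ [([d], [])], sts' ++ [σ j], by simp [hlen'], hnodupNew,
              hstsNew, ?_, ?_, ?_, ?_, ?_⟩
            · intro ent hent
              rcases List.mem_append.mp hent with h | h
              · exact hG' ent h
              · rw [List.mem_singleton] at h
                rw [h]
                exact ⟨hGletter d hdlt, hGnil⟩
            · refine ⟨fun i => if i = 1 then 0 else l' (i - 1), ?_⟩
              rw [buildW_snoc]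
              have h2 : buildW ents'
                  (fun i => (fun i => if i = 1 then 0 else l' (i - 1)) (i + 1))
                  = buildW ents' l' := by
                apply buildW_congr
                intro i h1i h2i
                simp only
                rw [if_neg (by omega)]
                congr 1
              rw [h2, hl']
              show (X.drop (J + 1)).reverse ++ ([d] ++ wpow [] _) = _
              rw [wpow_nil, List.append_nil, hdropj, List.reverse_cons]
            · intro l
              rw [buildW_snoc, deltaW_append]
              have hE : deltaW δ (([d], ([] : List ℕ)).1 ++ wpow ([d], ([] : List ℕ)).2 (l 1))
                  (σ j) = σ (J + 1) := by
                show deltaW δ ([d] ++ wpow [] (l 1)) (σ j) = σ (J + 1)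
                rw [wpow_nil, List.append_nil]
                show δ d (σ j) = σ (J + 1)
                rw [hσJ1, hJmem.2.2]
              rw [hE]
              exact hδ' _
            · intro l
              rw [buildW_snoc]
              by_cases hbe : buildW ents' (fun i => l (i + 1)) = []
              · rw [hbe, List.nil_append]
                have hJ1 : J + 1 = X.length := by
                  by_contra hcon
                  exact hne' (by omega) _ hbe
                show NoLeadZero ([d] ++ wpow [] (l 1))
                rw [wpow_nil, List.append_nil]
                exact hdlast hJ1
              · exact noLeadZero_append_left (hNLZ' _) hbe
            · intro _ l
              rw [buildW_snoc]
              intro hcon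
              rcases List.append_eq_nil_iff.mp hcon with ⟨_, h2⟩
              rcases List.append_eq_nil_iff.mp h2 with ⟨h3, _⟩
              simp at h3
          · -- C nonempty : cycle entry with letter
            obtain ⟨z, e, hzne, hepos, hzword, hCz, hzlen, hztake, ha0mem, ha0le⟩ :=
              cycData hCne
            obtain ⟨hmrescyc, hmresmod, hmresle⟩ := mresData z e ha0mem.1 ha0mem.2
              (by rw [← hCz]; exact hCcyc)
            set a0 := a0fn (σ j) z with ha0
            set c := e % a0 with hc'
            set mres := mresfn (σ j) z c with hmres
            have hclt : c < a0 := by rw [hc']; exact Nat.mod_lt _ ha0mem.1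
            have hrep : ∃ t0, e = mres + a0 * t0 := by
              have hdvd : a0 ∣ e - mres := by
                apply (Nat.modEq_iff_dvd' hmresle).mp
                show mres % a0 = e % a0
                rw [hmresmod, hc']
              obtain ⟨q, hq⟩ := hdvd
              exact ⟨q, by omega⟩
            obtain ⟨t0, ht0⟩ := hrep
            have hGa0 : wpow z a0 ∈ G := by
              refine ⟨(σ j, ⟨z.length, by have := hBle (σ j); omega⟩, ⟨1, by omega⟩,
                ⟨0, by omega⟩, none), ?_⟩
              simp only [hGfun, Option.elim]
              rw [hztake]
              simp [ha0]
            have hGu : [d] ++ wpow z mres ∈ G := by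
              refine ⟨(σ j, ⟨z.length, by have := hBle (σ j); omega⟩, ⟨2, by omega⟩,
                ⟨c, by have := hBle (σ j); omega⟩, some ⟨d, hdlt⟩), ?_⟩
              simp only [hGfun, Option.elim]
              rw [hztake]
              simp [hmres]
            have hXdj : (X.drop j).reverse = (X.drop (J + 1)).reverse ++ ([d] ++ C) := by
              conv_lhs => rw [hdropsplit]
              rw [List.reverse_append, hC]
              have : (d :: X.drop (J + 1)).reverse = (X.drop (J + 1)).reverse ++ [d] :=
                List.reverse_cons
              rw [this, List.append_assoc]
            refine ⟨ents' ++ [([d] ++ wpow z mres, wpow z a0)], sts' ++ [σ j],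
              by simp [hlen'], hnodupNew, hstsNew, ?_, ?_, ?_, ?_, ?_⟩
            · intro ent hent
              rcases List.mem_append.mp hent with h | h
              · exact hG' ent h
              · rw [List.mem_singleton] at h
                rw [h]
                exact ⟨hGu, hGa0⟩
            · refine ⟨fun i => if i = 1 then t0 else l' (i - 1), ?_⟩
              rw [buildW_snoc]
              have h2 : buildW ents'
                  (fun i => (fun i => if i = 1 then t0 else l' (i - 1)) (i + 1))
                  = buildW ents' l' := by
                apply buildW_congr
                intro i h1i h2i
                simp only
                rw [if_neg (by omega)]
                congr 1
              rw [h2, hl', hXdj]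
              show _ ++ (([d] ++ wpow z mres) ++ wpow (wpow z a0)
                (if 1 = 1 then t0 else l' 0)) = _
              rw [if_pos rfl, ← wpow_mul, List.append_assoc, ← wpow_add, ← ht0, ← hCz]
            · intro l
              rw [buildW_snoc, deltaW_append]
              have hE : deltaW δ (([d] ++ wpow z mres) ++ wpow (wpow z a0) (l 1)) (σ j)
                  = σ (J + 1) := by
                rw [deltaW_append, deltaW_append]
                rw [deltaW_wpow_cycle ha0mem.2, hmrescyc]
                show δ d (σ j) = σ (J + 1)
                rw [hσJ1, hJmem.2.2]
              rw [hE]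
              exact hδ' _
            · intro l
              rw [buildW_snoc]
              by_cases hbe : buildW ents' (fun i => l (i + 1)) = []
              · rw [hbe, List.nil_append]
                have hJ1 : J + 1 = X.length := by
                  by_contra hcon
                  exact hne' (by omega) _ hbe
                apply noLeadZero_append_left (v := wpow (wpow z a0) (l 1))
                apply noLeadZero_append_left (v := wpow z mres)
                · exact hdlast hJ1
                · simp
                · simp
              · exact noLeadZero_append_left (hNLZ' _) hbe
            · intro _ l
              rw [buildW_snoc]
              intro hcon
              rcases List.append_eq_nil_iff.mp hcon with ⟨_, h2⟩
              rcases List.append_eq_nil_iff.mp h2 with ⟨h3, _⟩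
              rcases List.append_eq_nil_iff.mp h3 with ⟨h4, _⟩
              simp at h4
    -- use the decomposition at j = 0
    obtain ⟨ents, sts, hlen0, hnodup0, _, hGents, ⟨l₀, hl₀⟩, hδ0, hNLZ0, hne0⟩ :=
      QLem X.length 0 (by omega) (by omega)
    have hentR : ents.length ≤ R := by
      rw [hlen0, hR]
      exact List.Nodup.length_le_card hnodup0
    refine ⟨(fun i => (uvOf ents i).1, fun i => (uvOf ents i).2), ?_, ?_⟩
    · have haridBuild : ∀ l, aridWord (fun i => (uvOf ents i).1)
          (fun i => (uvOf ents i).2) l R = buildW ents l := by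
        intro l
        rw [aridWord_pad (r := ents.length) (fun i hi => by rw [uvOf_gt ents i hi]; exact ⟨rfl, rfl⟩)
          R hentR]
        exact aridWord_uvOf ents l
      refine ⟨?_, ?_, ?_⟩
      · intro i
        rcases uvOf_mem ents i with h | h
        · constructor
          · show (uvOf ents i).1 ∈ G
            rw [h]
            exact hGnil
          · show (uvOf ents i).2 ∈ G
            rw [h]
            exact hGnil
        · exact hGents _ h
      · intro i hi
        have h := uvOf_gt ents i (by omega)
        constructor
        · show (uvOf ents i).1 = []
          rw [h]
        · show (uvOf ents i).2 = []
          rw [h]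
      · intro n' hn'
        simp only [hfamOf, Set.mem_setOf_eq] at hn'
        obtain ⟨l, hl⟩ := hn'
        rw [hl, haridBuild]
        have hword := isWord_buildW
          (fun ent he => ⟨hGword _ (hGents ent he).1, hGword _ (hGents ent he).2⟩) l
        have hXlen0 : 0 < X.length := List.length_pos_iff.mpr hXne
        apply (hmem _ hword (hNLZ0 l) (hne0 hXlen0 l)).mpr
        have h := hδ0 l
        rw [hσ0] at h
        rw [h]
        exact hτfin
    · simp only [hfamOf, Set.mem_setOf_eq]
      refine ⟨l₀, ?_⟩
      have haridBuild : aridWord (fun i => (uvOf ents i).1)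
          (fun i => (uvOf ents i).2) l₀ R = buildW ents l₀ := by
        rw [aridWord_pad (r := ents.length) (fun i hi => by rw [uvOf_gt ents i hi]; exact ⟨rfl, rfl⟩)
          R hentR]
        exact aridWord_uvOf ents l₀
      rw [haridBuild, hl₀, List.drop_zero, hvalX]
  -- final assembly of the arid structure
  refine ⟨R, hFfin.toFinset.card, fun jj => famOf ((hFfin.toFinset.equivFin.symm jj) : _), ?_, ?_⟩
  · intro jj
    set q := ((hFfin.toFinset.equivFin.symm jj) : ((ℕ → List ℕ) × (ℕ → List ℕ))) with hq
    have hqF : q ∈ F := hFfin.mem_toFinset.mp (hFfin.toFinset.equivFin.symm jj).2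
    refine ⟨q.1, q.2, ?_, ?_, ?_⟩
    · intro i
      exact hGword _ (hqF.1 i).1
    · intro i
      exact hGword _ (hqF.1 i).2
    · rw [hfamOf]
  · ext n
    simp only [Set.mem_iUnion]
    constructor
    · intro hnZ
      obtain ⟨q, hqF, hnq⟩ := hcover n hnZ
      refine ⟨hFfin.toFinset.equivFin ⟨q, hFfin.mem_toFinset.mpr hqF⟩, ?_⟩
      rw [Equiv.symm_apply_apply]
      exact hnq
    · rintro ⟨jj, hjj⟩
      have hqF : ((hFfin.toFinset.equivFin.symm jj) : ((ℕ → List ℕ) × (ℕ → List ℕ))) ∈ F :=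
        hFfin.mem_toFinset.mp (hFfin.toFinset.equivFin.symm jj).2
      exact hqF.2.2 hjj

/-- in the sparse case, the set `Z = {n ∈ ℕ : a n ≠ 0}` is arid in base `k`. -/
theorem stmt3 (k : ℕ) (hk : 2 ≤ k) (a : ℕ → ℂ)
    (ha : IsAutomatic k a) (hmul : IsMult a)
    (hsparse : {p : ℕ | p.Prime ∧ ∃ α : ℕ, 0 < α ∧ a (p ^ α) = 0}.Infinite) :
    Arid k {n : ℕ | 0 < n ∧ a n ≠ 0} := by
  obtain ⟨S, fS, s₀, δ, τ, ha'⟩ := ha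
  haveI := fS
  by_cases hb : BStat k {n : ℕ | 0 < n ∧ a n ≠ 0}
  · exact (bstat_false k hk a hmul hsparse hb).elim
  · apply main_dichotomy k hk s₀ δ τ _ ?_ ?_ hb
    · intro n hn
      exact hn.1
    · intro w hw hnlz hne
      constructor
      · intro hmemw
        rw [← ha' w hw hnlz]
        exact hmemw.2
      · intro hτ
        refine ⟨valk_pos (by omega) hne hnlz, ?_⟩
        rw [ha' w hw hnlz]
        exact hτ

end MultAuto
end
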